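/- If κ_m(h₀) > 0 for some h₀ > 0, then κ_m(h) > 0 for every h > 0. -/

import Mathlib

open MeasureTheory

/-- The semi-norm `|f|_h = sup_{C ∈ 𝒞} |∫_C f dμ| / (μ(C) + h)`. -/
noncomputable def normH {E : Type*} [MeasurableSpace E] (μ : Measure E)
    (𝒞 : Set (Set E)) (f : E → ℝ) (h : ℝ) : ℝ :=
  ⨆ C : 𝒞, |∫ x in (C : Set E), f x ∂μ| / ((μ (C : Set E)).toReal + h)

/-- `κ_m(h) = inf_{p,q ∈ m, ‖p-q‖_∞ > 0} |p-q|_h / ‖p-q‖_∞`. -/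
noncomputable def kappa {E : Type*} [MeasurableSpace E] (μ : Measure E)
    (𝒞 : Set (Set E)) (m : Set (E → ℝ)) (h : ℝ) : ℝ :=
  sInf {x : ℝ | ∃ p ∈ m, ∃ q ∈ m, 0 < (eLpNorm (p - q) ⊤ μ).toReal ∧
    x = normH μ 𝒞 (p - q) h / (eLpNorm (p - q) ⊤ μ).toReal}

lemma mul_ciSup_le_ciSup {ι : Sort*} (g₀ g : ι → ℝ) (c d : ℝ) (hc : 0 < c) (hd : 0 ≤ d)
    (h1 : ∀ i, c * g₀ i ≤ g i) (h2 : ∀ i, g i ≤ d * g₀ i) :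
    c * (⨆ i, g₀ i) ≤ ⨆ i, g i := by
  rcases isEmpty_or_nonempty ι with hι | hι
  · simp [Real.iSup_of_isEmpty]
  by_cases hb : BddAbove (Set.range g)
  · have h3 : (⨆ i, g₀ i) ≤ (⨆ i, g i) / c := by
      refine ciSup_le fun i => ?_
      rw [le_div_iff₀ hc]
      calc g₀ i * c = c * g₀ i := mul_comm _ _
        _ ≤ g i := h1 i
        _ ≤ ⨆ i, g i := le_ciSup hb i
    rw [le_div_iff₀ hc] at h3
    linarith
  · have hb0 : ¬ BddAbove (Set.range g₀) := by
      rintro ⟨M, hM⟩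
      refine hb ⟨d * M, ?_⟩
      rintro x ⟨i, rfl⟩
      calc g i ≤ d * g₀ i := h2 i
        _ ≤ d * M := by
            have := hM ⟨i, rfl⟩
            exact mul_le_mul_of_nonneg_left this hd
    rw [Real.iSup_of_not_bddAbove hb0, Real.iSup_of_not_bddAbove hb, mul_zero]

lemma normH_nonneg {E : Type*} [MeasurableSpace E] (μ : Measure E)
    (𝒞 : Set (Set E)) (f : E → ℝ) (h : ℝ) (hh : 0 < h) : 0 ≤ normH μ 𝒞 f h :=
  Real.iSup_nonneg fun C => div_nonneg (abs_nonneg _)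
    (add_nonneg ENNReal.toReal_nonneg hh.le)

lemma min_mul_normH_le {E : Type*} [MeasurableSpace E] (μ : Measure E)
    (𝒞 : Set (Set E)) (f : E → ℝ) (h₁ h₂ : ℝ) (hh₁ : 0 < h₁) (hh₂ : 0 < h₂) :
    min 1 (h₁ / h₂) * normH μ 𝒞 f h₁ ≤ normH μ 𝒞 f h₂ := by
  set c := min 1 (h₁ / h₂) with hcdef
  set d := max 1 (h₁ / h₂) with hddef
  have hc : 0 < c := lt_min one_pos (div_pos hh₁ hh₂)
  have hd : 0 ≤ d := le_trans zero_le_one (le_max_left _ _)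
  refine mul_ciSup_le_ciSup _ _ c d hc hd (fun C => ?_) (fun C => ?_)
  all_goals
    set a := |∫ x in (C : Set E), f x ∂μ| with hadef
    have ha : 0 ≤ a := abs_nonneg _
    set t := (μ (C : Set E)).toReal with htdef
    have ht : 0 ≤ t := ENNReal.toReal_nonneg
  · -- c * (a / (t + h₁)) ≤ a / (t + h₂)
    have hc1 : c ≤ 1 := min_le_left _ _
    have hc2 : c * h₂ ≤ h₁ := by
      calc c * h₂ ≤ (h₁ / h₂) * h₂ := by
            exact mul_le_mul_of_nonneg_right (min_le_right _ _) hh₂.le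
        _ = h₁ := div_mul_cancel₀ _ hh₂.ne'
    rw [mul_div_assoc', div_le_div_iff₀ (by linarith) (by linarith)]
    nlinarith [mul_le_mul_of_nonneg_left hc2 ha, mul_le_mul_of_nonneg_left hc1 (mul_nonneg ha ht)]
  · -- a / (t + h₂) ≤ d * (a / (t + h₁))
    have hd1 : 1 ≤ d := le_max_left _ _
    have hd2 : h₁ ≤ d * h₂ := by
      calc h₁ = (h₁ / h₂) * h₂ := (div_mul_cancel₀ _ hh₂.ne').symm
        _ ≤ d * h₂ := mul_le_mul_of_nonneg_right (le_max_right _ _) hh₂.le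
    rw [mul_div_assoc', div_le_div_iff₀ (by linarith) (by linarith)]
    nlinarith [mul_le_mul_of_nonneg_left hd2 ha, mul_le_mul_of_nonneg_left hd1 (mul_nonneg ha ht)]

theorem kappa_pos_of_pos {E : Type*} [MeasurableSpace E] (μ : Measure E)
    [SigmaFinite μ] (𝒞 : Set (Set E)) (m : Set (E → ℝ))
    (hm : ∀ f ∈ m, Integrable f μ ∧ MemLp f ⊤ μ)
    (h𝒞 : ∀ C ∈ 𝒞, μ C < ⊤)
    (h₀ : ℝ) (hh₀ : 0 < h₀) (hpos : 0 < kappa μ 𝒞 m h₀) :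
    ∀ h : ℝ, 0 < h → 0 < kappa μ 𝒞 m h := by
  intro h hh
  set c := min 1 (h₀ / h) with hcdef
  have hc : 0 < c := lt_min one_pos (div_pos hh₀ hh)
  have hbdd₀ : BddBelow {x : ℝ | ∃ p ∈ m, ∃ q ∈ m, 0 < (eLpNorm (p - q) ⊤ μ).toReal ∧
      x = normH μ 𝒞 (p - q) h₀ / (eLpNorm (p - q) ⊤ μ).toReal} := by
    refine ⟨0, ?_⟩
    rintro x ⟨p, hp, q, hq, hN, rfl⟩
    exact div_nonneg (normH_nonneg μ 𝒞 _ h₀ hh₀) hN.le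
  have hne₀ : {x : ℝ | ∃ p ∈ m, ∃ q ∈ m, 0 < (eLpNorm (p - q) ⊤ μ).toReal ∧
      x = normH μ 𝒞 (p - q) h₀ / (eLpNorm (p - q) ⊤ μ).toReal}.Nonempty := by
    by_contra hne
    rw [Set.not_nonempty_iff_eq_empty] at hne
    rw [kappa, hne, Real.sInf_empty] at hpos
    exact lt_irrefl 0 hpos
  obtain ⟨x₀, p₀, hp₀, q₀, hq₀, hN₀, hx₀⟩ := hne₀
  have hne : {x : ℝ | ∃ p ∈ m, ∃ q ∈ m, 0 < (eLpNorm (p - q) ⊤ μ).toReal ∧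
      x = normH μ 𝒞 (p - q) h / (eLpNorm (p - q) ⊤ μ).toReal}.Nonempty :=
    ⟨_, p₀, hp₀, q₀, hq₀, hN₀, rfl⟩
  have key : ∀ x ∈ {x : ℝ | ∃ p ∈ m, ∃ q ∈ m, 0 < (eLpNorm (p - q) ⊤ μ).toReal ∧
      x = normH μ 𝒞 (p - q) h / (eLpNorm (p - q) ⊤ μ).toReal},
      c * kappa μ 𝒞 m h₀ ≤ x := by
    rintro x ⟨p, hp, q, hq, hN, rfl⟩
    have h1 : kappa μ 𝒞 m h₀ ≤ normH μ 𝒞 (p - q) h₀ / (eLpNorm (p - q) ⊤ μ).toReal :=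
      csInf_le hbdd₀ ⟨p, hp, q, hq, hN, rfl⟩
    have h2 : c * normH μ 𝒞 (p - q) h₀ ≤ normH μ 𝒞 (p - q) h :=
      min_mul_normH_le μ 𝒞 (p - q) h₀ h hh₀ hh
    calc c * kappa μ 𝒞 m h₀
        ≤ c * (normH μ 𝒞 (p - q) h₀ / (eLpNorm (p - q) ⊤ μ).toReal) :=
          mul_le_mul_of_nonneg_left h1 hc.le
      _ = (c * normH μ 𝒞 (p - q) h₀) / (eLpNorm (p - q) ⊤ μ).toReal := by
          rw [mul_div_assoc']
      _ ≤ normH μ 𝒞 (p - q) h / (eLpNorm (p - q) ⊤ μ).toReal := by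
          gcongr
  have hfin : c * kappa μ 𝒞 m h₀ ≤ kappa μ 𝒞 m h := le_csInf hne key
  exact lt_of_lt_of_le (mul_pos hc hpos) hfin
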